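/- Let α be a type, a : α, m : ℕ, and n : Fin m → ℕ. Consider the ordered product language L = (List.ofFn (fun i : Fin m => ({[a]} : Language α) ^ (n i) + 1)).prod, i.e. the concatenation, in order of increasing index, of the languages ({[a]}^{n i} + 1) where 1 denotes the language containing only the empty word. Then for every word w : List α, w ∈ L if and only if there exists a Finset s of Fin m such that w = List.replicate (∑ i in s, n i) a. (This is the core counting fact behind the paper's reduction from Subset-Sum: the optional repetitions (a{n₁}+ε)⋯(a{n_m}+ε) match exactly the words a^x with x a subset sum of {n₁,…,n_m}.) -/

import Mathlib

lemma aux_pow {α : Type*} (a : α) (k : ℕ) (w : List α) :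
    w ∈ ({[a]} : Language α) ^ k ↔ w = List.replicate k a := by
  induction k generalizing w with
  | zero =>
    rw [pow_zero, Language.mem_one]
    simp
  | succ k ih =>
    rw [pow_succ]
    constructor
    · rintro ⟨u, hu, v, hv, rfl⟩
      replace hu := (ih u).1 hu
      replace hv : v = [a] := hv
      subst hu hv
      simp [List.replicate_succ']
    · rintro rfl
      exact ⟨List.replicate k a, (ih _).2 rfl, [a], rfl, by simp [List.replicate_succ']⟩

theorem stmt_0 {α : Type*} (a : α) (m : ℕ) (n : Fin m → ℕ) (w : List α) :
    w ∈ (List.ofFn (fun i : Fin m => ({[a]} : Language α) ^ (n i) + 1)).prod ↔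
      ∃ s : Finset (Fin m), w = List.replicate (∑ i ∈ s, n i) a := by
  induction m generalizing w with
  | zero =>
    simp only [List.ofFn_zero, List.prod_nil, Language.mem_one]
    exact ⟨fun h => ⟨∅, by simp [h]⟩,
      fun ⟨s, h⟩ => by rw [Finset.eq_empty_of_isEmpty s] at h; simpa using h⟩
  | succ m ih =>
    rw [List.ofFn_succ, List.prod_cons]
    constructor
    · rintro ⟨u, hu, v, hv, rfl⟩
      rcases (ih (fun i => n i.succ) v).1 hv with ⟨s, rfl⟩
      have hsum : ∑ i ∈ s.map (Fin.succEmb m), n i = ∑ i ∈ s, n i.succ := by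
        rw [Finset.sum_map]; rfl
      rcases hu with hu | hu
      · replace hu := (aux_pow a _ u).1 hu
        subst hu
        refine ⟨insert 0 (s.map (Fin.succEmb m)), ?_⟩
        have h0 : (0 : Fin (m+1)) ∉ s.map (Fin.succEmb m) := by
          simp [Fin.succ_ne_zero]
        rw [Finset.sum_insert h0, hsum, List.replicate_add]
      · replace hu := (Language.mem_one u).1 hu
        subst hu
        exact ⟨s.map (Fin.succEmb m), by simp [hsum]⟩
    · rintro ⟨s, rfl⟩
      set t : Finset (Fin m) := Finset.univ.filter (fun i => i.succ ∈ s) with ht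
      have hmap : t.map (Fin.succEmb m) = s.erase 0 := by
        ext j
        simp only [Finset.mem_map, Finset.mem_filter, Finset.mem_univ, true_and,
          Finset.mem_erase, ht]
        constructor
        · rintro ⟨i, hi, rfl⟩; exact ⟨Fin.succ_ne_zero i, hi⟩
        · rintro ⟨hj, hjs⟩
          obtain ⟨i, rfl⟩ := Fin.eq_succ_of_ne_zero hj
          exact ⟨i, hjs, rfl⟩
      have hsum : ∑ i ∈ t, n i.succ = ∑ i ∈ s.erase 0, n i := by
        rw [← hmap, Finset.sum_map]; rfl
      have hv : List.replicate (∑ i ∈ s.erase 0, n i) a ∈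
          (List.ofFn (fun i : Fin m => ({[a]} : Language α) ^ (n i.succ) + 1)).prod := by
        exact (ih (fun i => n i.succ) _).2 ⟨t, by rw [hsum]⟩
      by_cases h0 : (0 : Fin (m+1)) ∈ s
      · refine ⟨List.replicate (n 0) a, Or.inl ((aux_pow a _ _).2 rfl), _, hv, ?_⟩
        show List.replicate (n 0) a ++ List.replicate (∑ i ∈ s.erase 0, n i) a = _
        rw [← List.replicate_add, Finset.add_sum_erase _ _ h0]
      · refine ⟨[], Or.inr ((Language.mem_one _).mpr rfl), _, hv, ?_⟩
        show [] ++ _ = _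
        rw [Finset.erase_eq_of_notMem h0, List.nil_append]
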